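/- Let (𝒩, B) be a no-signaling channel from n bits to N bits, let T, J ⊆ [N], and let x, x' ∈ {−1,1}^n agree on all coordinates in B(J ∪ T) \ {⊥}. Then 𝒩^J(x) = 𝒩^J(x'), and for every Y ∈ {−1,1}^J in the support of 𝒩^J(x), the reduced conditional channels agree: 𝒩^T(x | y_J = Y) = 𝒩^T(x' | y_J = Y). -/

import Mathlib

open scoped Classical ENNReal

noncomputable section

/-- A `±1` bit, encoded as a unit of `ℤ`. -/
abbrev Bit := ℤˣ

/-- A channel from `ι`-indexed bit strings to `κ`-indexed bit strings. -/
abbrev Channel (ι κ : Type) : Type := (ι → Bit) → PMF (κ → Bit)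

/-- Marginal of a distribution on the cube on the coordinates in `T`. -/
def marg {κ : Type} (p : PMF (κ → Bit)) (T : Finset κ) : PMF ({i // i ∈ T} → Bit) :=
  p.map fun y i => y i.1

/-- The preimage `B⁻¹(S ∪ {⊥})`. -/
def preim {ι κ : Type} [Fintype κ] (B : κ → Option ι) (S : Finset ι) : Finset κ :=
  Finset.univ.filter fun ℓ => ∀ a, B ℓ = some a → a ∈ S

/-- `(𝒩, B)` is a no-signaling channel: for every `S` and inputs agreeing on `S`, the
marginals of the outputs on `B⁻¹(S ∪ {⊥})` agree. -/
def NoSignaling {ι κ : Type} [Fintype κ] (𝒩 : Channel ι κ) (B : κ → Option ι) : Prop :=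
  ∀ (S : Finset ι) (x x' : ι → Bit), (∀ a ∈ S, x a = x' a) →
    marg (𝒩 x) (preim B S) = marg (𝒩 x') (preim B S)


/-- Reduced conditional channel value: the marginal on `T` of `p` conditioned on the
event `y_J = Y`. -/
def condMarg {κ : Type} (p : PMF (κ → Bit)) (J T : Finset κ) (Y : {j // j ∈ J} → Bit)
    (h : Y ∈ (marg p J).support) : PMF ({i // i ∈ T} → Bit) :=
  marg (p.filter {y | ∀ j : {j // j ∈ J}, y j.1 = Y j} (by
    rw [marg, PMF.support_map] at h
    obtain ⟨y, hy, rfl⟩ := h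
    exact ⟨y, fun j => rfl, hy⟩)) T

end

theorem PMF.map_filter' {α β : Type*} (p : PMF α) (f : α → β) (s : Set β)
    (h : ∃ a ∈ f ⁻¹' s, a ∈ p.support) (h' : ∃ b ∈ s, b ∈ (p.map f).support) :
    (p.filter (f ⁻¹' s) h).map f = (p.map f).filter s h' := by
  have hc : (∑' a, (f ⁻¹' s).indicator p a) = ∑' b, s.indicator (p.map f) b := by
    rw [← PMF.toOuterMeasure_apply, ← PMF.toOuterMeasure_apply,
      PMF.toOuterMeasure_map_apply]
  ext b
  rw [PMF.map_apply]
  simp only [PMF.filter_apply]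
  have step1 : (∑' a, if b = f a then
        (f ⁻¹' s).indicator p a * (∑' a', (f ⁻¹' s).indicator p a')⁻¹ else 0)
      = (∑' a, if b = f a then (f ⁻¹' s).indicator p a else 0) *
          (∑' a', (f ⁻¹' s).indicator p a')⁻¹ := by
    rw [← ENNReal.tsum_mul_right]
    congr 1; ext a; rw [ite_mul, zero_mul]
  rw [step1, hc]
  congr 1
  by_cases hb : b ∈ s
  · rw [Set.indicator_of_mem hb, PMF.map_apply]
    congr 1; ext a
    by_cases hba : b = f a
    · have ha : a ∈ f ⁻¹' s := by rw [Set.mem_preimage, ← hba]; exact hb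
      simp [hba, Set.indicator_of_mem ha]
    · simp [hba]
  · rw [Set.indicator_of_notMem hb]
    refine ENNReal.summable.tsum_eq_zero_iff.2 fun a => ?_
    by_cases hba : b = f a
    · have ha : a ∉ f ⁻¹' s := by rw [Set.mem_preimage, ← hba]; exact hb
      simp [hba, Set.indicator_of_notMem ha]
    · simp [hba]

theorem marg_marg {κ : Type} (p : PMF (κ → Bit)) {T U : Finset κ} (hT : T ⊆ U) :
    marg p T = (marg p U).map (fun z i => z ⟨i.1, hT i.2⟩) := by
  rw [marg, marg, PMF.map_comp]
  rfl

theorem mem_preim {ι κ : Type} [Fintype κ] (B : κ → Option ι) (S : Finset ι) (ℓ : κ) :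
    ℓ ∈ preim B S ↔ ∀ a, B ℓ = some a → a ∈ S := by
  simp [preim]

theorem PMF.filter_eq_of_eq {α : Type*} {p q : PMF α} (hpq : p = q) (s : Set α)
    (h : ∃ a ∈ s, a ∈ p.support) (h' : ∃ a ∈ s, a ∈ q.support) :
    p.filter s h = q.filter s h' := by subst hpq; rfl

theorem condMarg_eq {κ : Type} (p : PMF (κ → Bit)) (J T U : Finset κ) (hJ : J ⊆ U)
    (hT : T ⊆ U) (Y : {j // j ∈ J} → Bit) (h : Y ∈ (marg p J).support)
    (h' : ∃ z ∈ {z : {i // i ∈ U} → Bit | ∀ j : {j // j ∈ J}, z ⟨j.1, hJ j.2⟩ = Y j},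
      z ∈ (marg p U).support) :
    condMarg p J T Y h =
      ((marg p U).filter {z | ∀ j : {j // j ∈ J}, z ⟨j.1, hJ j.2⟩ = Y j} h').map
        (fun z i => z ⟨i.1, hT i.2⟩) := by
  rw [condMarg, marg_marg _ hT]
  congr 1
  exact PMF.map_filter' p (fun (y : κ → Bit) (i : {i // i ∈ U}) => y i.1)
    {z : {i // i ∈ U} → Bit | ∀ j : {j // j ∈ J}, z ⟨j.1, hJ j.2⟩ = Y j} _ h'

/-- (Proposition, Section 3.)  If `x` and `x'` agree on `B(J ∪ T) ∖ {⊥}`, then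
`𝒩^J(x) = 𝒩^J(x')`, and for every `Y` in the support of `𝒩^J(x)` the reduced
conditional channels agree: `𝒩^T(x | y_J = Y) = 𝒩^T(x' | y_J = Y)`. -/
theorem nsc_conditional_agree {n N : ℕ}
    (𝒩 : Channel (Fin n) (Fin N)) (B : Fin N → Option (Fin n))
    (hNS : NoSignaling 𝒩 B) (T J : Finset (Fin N)) (x x' : Fin n → Bit)
    (hagree : ∀ ℓ ∈ J ∪ T, ∀ a : Fin n, B ℓ = some a → x a = x' a) :
    marg (𝒩 x) J = marg (𝒩 x') J
    ∧ ∀ (Y : {j // j ∈ J} → Bit) (hY : Y ∈ (marg (𝒩 x) J).support)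
        (hY' : Y ∈ (marg (𝒩 x') J).support),
        condMarg (𝒩 x) J T Y hY = condMarg (𝒩 x') J T Y hY' := by
  set S : Finset (Fin n) := (J ∪ T).biUnion (fun ℓ => (B ℓ).toFinset) with hSdef
  have hSx : ∀ a ∈ S, x a = x' a := by
    intro a ha
    rw [hSdef, Finset.mem_biUnion] at ha
    obtain ⟨ℓ, hℓ, ha⟩ := ha
    rw [Option.mem_toFinset, Option.mem_def] at ha
    exact hagree ℓ hℓ a ha
  have hsub : ∀ ℓ ∈ J ∪ T, ℓ ∈ preim B S := by
    intro ℓ hℓ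
    rw [mem_preim]
    intro a ha
    rw [hSdef, Finset.mem_biUnion]
    exact ⟨ℓ, hℓ, by rw [Option.mem_toFinset, Option.mem_def]; exact ha⟩
  have hJ : J ⊆ preim B S := fun ℓ hℓ => hsub ℓ (Finset.mem_union_left _ hℓ)
  have hT : T ⊆ preim B S := fun ℓ hℓ => hsub ℓ (Finset.mem_union_right _ hℓ)
  have hmarg : marg (𝒩 x) (preim B S) = marg (𝒩 x') (preim B S) := hNS S x x' hSx
  have hmJ : marg (𝒩 x) J = marg (𝒩 x') J := by
    rw [marg_marg _ hJ, marg_marg _ hJ, hmarg]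
  refine ⟨hmJ, fun Y hY hY' => ?_⟩
  have hE : ∃ z ∈ {z : {i // i ∈ preim B S} → Bit | ∀ j : {j // j ∈ J},
      z ⟨j.1, hJ j.2⟩ = Y j}, z ∈ (marg (𝒩 x) (preim B S)).support := by
    rw [marg_marg _ hJ, PMF.support_map] at hY
    obtain ⟨z, hz, rfl⟩ := hY
    exact ⟨z, fun j => rfl, hz⟩
  have hE' : ∃ z ∈ {z : {i // i ∈ preim B S} → Bit | ∀ j : {j // j ∈ J},
      z ⟨j.1, hJ j.2⟩ = Y j}, z ∈ (marg (𝒩 x') (preim B S)).support := by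
    rw [← hmarg]; exact hE
  rw [condMarg_eq (𝒩 x) J T (preim B S) hJ hT Y hY hE,
    condMarg_eq (𝒩 x') J T (preim B S) hJ hT Y hY' hE']
  exact congrArg _ (PMF.filter_eq_of_eq hmarg _ hE hE')
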